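/- Let σ > 0 and a ∈ ℝ. Let q₀(z) = φ_{0,σ²}(z) and q_ρ(z) = ½ φ_{a,σ²}(z) + ½ φ_{−a,σ²}(z). Then ∫_ℝ q_ρ(z)²/q₀(z) dz = cosh(a²/σ²); equivalently, the chi-squared distance satisfies χ₂(Q_ρ‖Q₀) = ∫_ℝ (q_ρ(z) − q₀(z))²/q₀(z) dz = cosh(a²/σ²) − 1. -/

import Mathlib

/-- Gaussian density with mean `m` and variance `v`. -/
noncomputable def gaussDensity (m v z : ℝ) : ℝ :=
  (1 / Real.sqrt (2 * Real.pi * v)) * Real.exp (-(z - m) ^ 2 / (2 * v))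


open ProbabilityTheory Real MeasureTheory

lemma gaussDensity_eq (m : ℝ) {v : ℝ} (hv : 0 ≤ v) :
    gaussDensity m v = gaussianPDFReal m ⟨v, hv⟩ := by
  funext z
  simp [gaussDensity, gaussianPDFReal, one_div]
  rfl

lemma gaussDensity_integrable (m : ℝ) {v : ℝ} (hv : 0 ≤ v) :
    Integrable (gaussDensity m v) := by
  rw [gaussDensity_eq m hv]; exact integrable_gaussianPDFReal _ _

lemma gaussDensity_integral (m : ℝ) {v : ℝ} (hv : 0 < v) :
    ∫ z, gaussDensity m v z = 1 := by
  rw [gaussDensity_eq m hv.le]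
  exact integral_gaussianPDFReal_eq_one m (fun h => hv.ne' (congrArg NNReal.toReal h))

lemma gaussDensity_pos (m : ℝ) {v : ℝ} (hv : 0 < v) (z : ℝ) :
    0 < gaussDensity m v z := by
  have : 0 < Real.sqrt (2 * Real.pi * v) :=
    Real.sqrt_pos.2 (by positivity)
  unfold gaussDensity
  positivity

lemma gd_mul (a b : ℝ) {v : ℝ} (hv : 0 < v) (z : ℝ) :
    gaussDensity a v z * gaussDensity b v z / gaussDensity 0 v z
      = Real.exp (a * b / v) * gaussDensity (a + b) v z := by
  have hs : 0 < Real.sqrt (2 * Real.pi * v) := Real.sqrt_pos.2 (by positivity)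
  unfold gaussDensity
  rw [div_eq_iff (by positivity)]
  field_simp
  rw [← Real.exp_add, ← Real.exp_add, ← Real.exp_add]
  congr 1
  field_simp
  ring

lemma pt1 (a : ℝ) {v : ℝ} (hv : 0 < v) (z : ℝ) :
    ((1/2) * gaussDensity a v z + (1/2) * gaussDensity (-a) v z) ^ 2 / gaussDensity 0 v z
      = Real.exp (a^2/v)/4 * gaussDensity (2*a) v z
        + Real.exp (-(a^2)/v)/2 * gaussDensity 0 v z
        + Real.exp (a^2/v)/4 * gaussDensity (-(2*a)) v z := by
  have h0 := (gaussDensity_pos 0 hv z).ne'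
  have key : ((1/2) * gaussDensity a v z + (1/2) * gaussDensity (-a) v z) ^ 2
        / gaussDensity 0 v z
      = (1/4) * (gaussDensity a v z * gaussDensity a v z / gaussDensity 0 v z)
        + (1/2) * (gaussDensity a v z * gaussDensity (-a) v z / gaussDensity 0 v z)
        + (1/4) * (gaussDensity (-a) v z * gaussDensity (-a) v z / gaussDensity 0 v z) := by
    field_simp
    ring
  rw [key, gd_mul a a hv z, gd_mul a (-a) hv z, gd_mul (-a) (-a) hv z,
    show a + a = 2*a by ring, show a + -a = (0:ℝ) by ring,
    show -a + -a = -(2*a) by ring, show a * a = a^2 by ring,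
    show a * -a = -(a^2) by ring, show -a * -a = a^2 by ring]
  ring

lemma integral_comb (a : ℝ) {v : ℝ} (hv : 0 < v) :
    ∫ z, (Real.exp (a^2/v)/4 * gaussDensity (2*a) v z
        + Real.exp (-(a^2)/v)/2 * gaussDensity 0 v z
        + Real.exp (a^2/v)/4 * gaussDensity (-(2*a)) v z)
      = Real.cosh (a^2/v) := by
  have i1 := (gaussDensity_integrable (2*a) hv.le).const_mul (Real.exp (a^2/v)/4)
  have i2 := (gaussDensity_integrable 0 hv.le).const_mul (Real.exp (-(a^2)/v)/2)
  have i3 := (gaussDensity_integrable (-(2*a)) hv.le).const_mul (Real.exp (a^2/v)/4)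
  have i12 : Integrable (fun z => Real.exp (a^2/v)/4 * gaussDensity (2*a) v z
      + Real.exp (-(a^2)/v)/2 * gaussDensity 0 v z) := i1.add i2
  have i123 : Integrable (fun z => Real.exp (a^2/v)/4 * gaussDensity (2*a) v z
      + Real.exp (-(a^2)/v)/2 * gaussDensity 0 v z
      + Real.exp (a^2/v)/4 * gaussDensity (-(2*a)) v z) := i12.add i3
  rw [integral_add i12 i3, integral_add i1 i2,
    MeasureTheory.integral_const_mul, MeasureTheory.integral_const_mul, MeasureTheory.integral_const_mul,
    gaussDensity_integral _ hv, gaussDensity_integral _ hv, gaussDensity_integral _ hv,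
    Real.cosh_eq]
  ring_nf


/-- For `σ > 0` and `a ∈ ℝ`, with `q₀ = φ_{0,σ²}` and
`q_ρ = ½ φ_{a,σ²} + ½ φ_{−a,σ²}`, one has `∫ q_ρ²/q₀ = cosh(a²/σ²)` and
`χ₂(Q_ρ‖Q₀) = ∫ (q_ρ − q₀)²/q₀ = cosh(a²/σ²) − 1`. -/
theorem stmt4 (σ a : ℝ) (hσ : 0 < σ) :
    (∫ z : ℝ,
        ((1 / 2) * gaussDensity a (σ ^ 2) z + (1 / 2) * gaussDensity (-a) (σ ^ 2) z) ^ 2 /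
          gaussDensity 0 (σ ^ 2) z)
      = Real.cosh (a ^ 2 / σ ^ 2) ∧
    (∫ z : ℝ,
        ((1 / 2) * gaussDensity a (σ ^ 2) z + (1 / 2) * gaussDensity (-a) (σ ^ 2) z
            - gaussDensity 0 (σ ^ 2) z) ^ 2 /
          gaussDensity 0 (σ ^ 2) z)
      = Real.cosh (a ^ 2 / σ ^ 2) - 1 := by
  have hv : (0:ℝ) < σ ^ 2 := by positivity
  constructor
  · simp only [pt1 a hv]
    exact integral_comb a hv
  · have pt2 : ∀ z : ℝ,
        ((1/2) * gaussDensity a (σ^2) z + (1/2) * gaussDensity (-a) (σ^2) z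
            - gaussDensity 0 (σ^2) z) ^ 2 / gaussDensity 0 (σ^2) z
          = (Real.exp (a^2/σ^2)/4 * gaussDensity (2*a) (σ^2) z
              + Real.exp (-(a^2)/σ^2)/2 * gaussDensity 0 (σ^2) z
              + Real.exp (a^2/σ^2)/4 * gaussDensity (-(2*a)) (σ^2) z)
            - gaussDensity a (σ^2) z - gaussDensity (-a) (σ^2) z
            + gaussDensity 0 (σ^2) z := by
      intro z
      rw [← pt1 a hv z]
      have h0 := (gaussDensity_pos 0 hv z).ne'
      field_simp
      ring
    simp only [pt2]
    have i1 := (gaussDensity_integrable (2*a) hv.le).const_mul (Real.exp (a^2/σ^2)/4)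
    have i2 := (gaussDensity_integrable 0 hv.le).const_mul (Real.exp (-(a^2)/σ^2)/2)
    have i3 := (gaussDensity_integrable (-(2*a)) hv.le).const_mul (Real.exp (a^2/σ^2)/4)
    have iA : Integrable (fun z => Real.exp (a^2/σ^2)/4 * gaussDensity (2*a) (σ^2) z
        + Real.exp (-(a^2)/σ^2)/2 * gaussDensity 0 (σ^2) z
        + Real.exp (a^2/σ^2)/4 * gaussDensity (-(2*a)) (σ^2) z) := (i1.add i2).add i3
    have ia := gaussDensity_integrable a hv.le (v := σ^2)
    have ib := gaussDensity_integrable (-a) hv.le (v := σ^2)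
    have ic := gaussDensity_integrable 0 hv.le (v := σ^2)
    have iAa : Integrable (fun z => (Real.exp (a^2/σ^2)/4 * gaussDensity (2*a) (σ^2) z
        + Real.exp (-(a^2)/σ^2)/2 * gaussDensity 0 (σ^2) z
        + Real.exp (a^2/σ^2)/4 * gaussDensity (-(2*a)) (σ^2) z)
        - gaussDensity a (σ^2) z) := iA.sub ia
    have iAb : Integrable (fun z => (Real.exp (a^2/σ^2)/4 * gaussDensity (2*a) (σ^2) z
        + Real.exp (-(a^2)/σ^2)/2 * gaussDensity 0 (σ^2) z
        + Real.exp (a^2/σ^2)/4 * gaussDensity (-(2*a)) (σ^2) z)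
        - gaussDensity a (σ^2) z - gaussDensity (-a) (σ^2) z) := iAa.sub ib
    rw [integral_add iAb ic, integral_sub iAa ib,
      integral_sub iA ia, integral_comb a hv,
      gaussDensity_integral _ hv, gaussDensity_integral _ hv, gaussDensity_integral _ hv]
    ring
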